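/- Under decay of correlations against L¹ with non-increasing rate γ → 0, let A ∈ ℬ with 1_A ∈ 𝒞, and ℓ, t positive integers with ℓ·P(A) < 1; set L = 1 − ℓ·P(A) and Υ_A := t[P(A) + ‖1_A‖_𝒞 γ(t)] + Ξ_{A,ℓ}. Then for every k ∈ ℕ: |P(𝒲_{0, k(ℓ+t)}(A)) − L^k| ≤ k·Υ_A·(L + Υ_A)^{k-1}. -/

import Mathlib

open MeasureTheory

def avoidWindow {X : Type*} (T : X → X) (s ℓ : ℕ) (A : Set X) : Set X :=
  ⋂ i ∈ Finset.Ico s (s + ℓ), T^[i] ⁻¹' Aᶜ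
namespace BPE
variable {X : Type*} {f : X → X} {A : Set X}

lemma mem_aw {x : X} {m : ℕ} : x ∈ avoidWindow f 0 m A ↔ ∀ i < m, f^[i] x ∉ A := by
  simp [avoidWindow]

lemma aw_zero : avoidWindow f 0 0 A = Set.univ := by
  ext x; simp [mem_aw]

lemma aw_anti {m n : ℕ} (h : m ≤ n) : avoidWindow f 0 n A ⊆ avoidWindow f 0 m A := by
  intro x hx; rw [mem_aw] at *; exact fun i hi => hx i (lt_of_lt_of_le hi h)

lemma aw_meas {X : Type*} [MeasurableSpace X] {f : X → X} (hfm : Measurable f)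
    {A : Set X} (hA : MeasurableSet A) (m : ℕ) : MeasurableSet (avoidWindow f 0 m A) := by
  apply Finset.measurableSet_biInter
  exact fun i _ => (hfm.iterate i) hA.compl

-- subset: peel ℓ-block and (shrunk) future window
lemma aw_sub2 (ℓ t m' : ℕ) :
    avoidWindow f 0 (ℓ + m') A ⊆
      avoidWindow f 0 ℓ A ∩ f^[ℓ + t] ⁻¹' avoidWindow f 0 (m' - t) A := by
  intro x hx
  rw [mem_aw] at hx
  constructor
  · rw [mem_aw]; exact fun i hi => hx i (by omega)
  · rw [Set.mem_preimage, mem_aw]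
    intro i hi
    rw [← Function.iterate_add_apply]
    exact hx (i + (ℓ + t)) (by omega)

lemma aw_sub3 (ℓ t m : ℕ) :
    avoidWindow f 0 ℓ A ∩ f^[ℓ + t] ⁻¹' avoidWindow f 0 m A ⊆
      avoidWindow f 0 (ℓ + t + m) A ∪
        ⋃ i ∈ Finset.Ico ℓ (ℓ + t), (f^[i] ⁻¹' A ∩ f^[ℓ + t] ⁻¹' avoidWindow f 0 m A) := by
  intro x ⟨h1, h2⟩
  have h2' := h2
  rw [mem_aw] at h1
  rw [Set.mem_preimage, mem_aw] at h2
  by_cases hgap : ∀ i ∈ Finset.Ico ℓ (ℓ + t), f^[i] x ∉ A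
  · left
    rw [mem_aw]
    intro i hi
    rcases lt_or_ge i ℓ with h | h
    · exact h1 i h
    rcases lt_or_ge i (ℓ + t) with h' | h'
    · exact hgap i (Finset.mem_Ico.2 ⟨h, h'⟩)
    · have := h2 (i - (ℓ + t)) (by omega)
      rwa [← Function.iterate_add_apply, Nat.sub_add_cancel h'] at this
  · right
    push_neg at hgap
    obtain ⟨i, hi, hiA⟩ := hgap
    exact Set.mem_biUnion hi ⟨hiA, h2'⟩

lemma aw_sub4 {g t : ℕ} (hg : g ≤ t) (m : ℕ) :
    f^[g] ⁻¹' avoidWindow f 0 m A ⊆ f^[t] ⁻¹' avoidWindow f 0 (m - (t - g)) A := by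
  intro x hx
  rw [Set.mem_preimage, mem_aw] at *
  intro i hi
  have h := hx (t + i - g) (by omega)
  rw [← Function.iterate_add_apply, show t + i - g + g = i + t by omega] at h
  rwa [← Function.iterate_add_apply]

lemma bonferroni {X : Type*} [MeasurableSpace X] (μ : Measure X) (F : ℕ → Set X)
    (hF : ∀ i, MeasurableSet (F i)) (n : ℕ) :
    ∑ i ∈ Finset.range n, μ (F i) ≤
      μ (⋃ i ∈ Finset.range n, F i) +
        ∑ j ∈ Finset.range n, ∑ i ∈ Finset.range j, μ (F i ∩ F j) := by
  induction n with
  | zero => simp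
  | succ n ih =>
    rw [Finset.sum_range_succ, Finset.sum_range_succ (f := fun j => ∑ i ∈ Finset.range j, μ (F i ∩ F j))]
    have key : μ (⋃ i ∈ Finset.range n, F i) + μ (F n) ≤
        μ (⋃ i ∈ Finset.range (n+1), F i) + ∑ i ∈ Finset.range n, μ (F i ∩ F n) := by
      have h1 : (⋃ i ∈ Finset.range (n+1), F i) = (⋃ i ∈ Finset.range n, F i) ∪ F n := by
        ext x; simp [Finset.mem_range, Nat.lt_succ_iff_lt_or_eq]
        constructor
        · rintro ⟨i, hi, h⟩
          rcases Nat.lt_or_eq_of_le hi with hi | rfl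
          · exact Or.inl ⟨i, hi, h⟩
          · exact Or.inr h
        · rintro (⟨i, hi, h⟩ | h)
          · exact ⟨i, hi.le, h⟩
          · exact ⟨n, le_rfl, h⟩
      have h2 := measure_union_add_inter (μ := μ) (⋃ i ∈ Finset.range n, F i) (hF n)
      have h3 : (⋃ i ∈ Finset.range n, F i) ∩ F n = ⋃ i ∈ Finset.range n, (F i ∩ F n) := by
        ext x; simp; tauto
      calc μ (⋃ i ∈ Finset.range n, F i) + μ (F n)
          = μ ((⋃ i ∈ Finset.range n, F i) ∪ F n) + μ ((⋃ i ∈ Finset.range n, F i) ∩ F n) := h2.symm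
        _ ≤ μ (⋃ i ∈ Finset.range (n+1), F i) + ∑ i ∈ Finset.range n, μ (F i ∩ F n) := by
            rw [h1, h3] at *
            exact add_le_add le_rfl (measure_biUnion_finset_le _ _)
    calc ∑ i ∈ Finset.range n, μ (F i) + μ (F n)
        ≤ (μ (⋃ i ∈ Finset.range n, F i) +
            ∑ j ∈ Finset.range n, ∑ i ∈ Finset.range j, μ (F i ∩ F j)) + μ (F n) :=
          add_le_add ih le_rfl
      _ = (μ (⋃ i ∈ Finset.range n, F i) + μ (F n)) +
            ∑ j ∈ Finset.range n, ∑ i ∈ Finset.range j, μ (F i ∩ F j) := by ring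
      _ ≤ (μ (⋃ i ∈ Finset.range (n+1), F i) + ∑ i ∈ Finset.range n, μ (F i ∩ F n)) +
            ∑ j ∈ Finset.range n, ∑ i ∈ Finset.range j, μ (F i ∩ F j) := add_le_add key le_rfl
      _ = _ := by ring
variable {X : Type*} [MeasurableSpace X] {μ : Measure X} [IsProbabilityMeasure μ]
  {f : X → X} {𝒞 : Set (X → ℝ)} {N : (X → ℝ) → ℝ} {γ : ℕ → ℝ} {A : Set X}

lemma cor (hf : MeasurePreserving f μ μ)
    (hdecay : ∀ φ ∈ 𝒞, ∀ ψ : X → ℝ, Integrable ψ μ → ∀ n : ℕ,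
      |(∫ x, φ x * ψ (f^[n] x) ∂μ) - (∫ x, φ x ∂μ) * ∫ x, ψ x ∂μ| ≤
        N φ * (∫ x, |ψ x| ∂μ) * γ n)
    (hA : MeasurableSet A) (hind : A.indicator (fun _ => (1 : ℝ)) ∈ 𝒞)
    {B : Set X} (hB : MeasurableSet B) (n : ℕ) :
    |(μ (A ∩ f^[n] ⁻¹' B)).toReal - (μ A).toReal * (μ B).toReal| ≤
      N (A.indicator fun _ => (1 : ℝ)) * (μ B).toReal * γ n := by
  have hψ : Integrable (B.indicator (fun _ => (1 : ℝ))) μ :=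
    (integrable_const (1 : ℝ)).indicator hB
  have h := hdecay _ hind (B.indicator (fun _ => (1 : ℝ))) hψ n
  have hmix : ∫ x, A.indicator (fun _ => (1:ℝ)) x * B.indicator (fun _ => (1:ℝ)) (f^[n] x) ∂μ
      = (μ (A ∩ f^[n] ⁻¹' B)).toReal := by
    have : ∀ x, A.indicator (fun _ => (1:ℝ)) x * B.indicator (fun _ => (1:ℝ)) (f^[n] x)
        = (A ∩ f^[n] ⁻¹' B).indicator (fun _ => (1:ℝ)) x := by
      intro x
      by_cases hxA : x ∈ A <;> by_cases hxB : f^[n] x ∈ B <;>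
        simp [Set.indicator_apply, hxA, hxB, Set.mem_preimage]
    rw [show (fun x => A.indicator (fun _ => (1:ℝ)) x * B.indicator (fun _ => (1:ℝ)) (f^[n] x)) =
        (A ∩ f^[n] ⁻¹' B).indicator (fun _ => (1:ℝ)) from funext this]
    exact integral_indicator_one (hA.inter ((hf.measurable.iterate n) hB))
  have hA' : ∫ x, A.indicator (fun _ => (1:ℝ)) x ∂μ = (μ A).toReal := integral_indicator_one hA
  have hB' : ∫ x, B.indicator (fun _ => (1:ℝ)) x ∂μ = (μ B).toReal := integral_indicator_one hB
  have habs : ∫ x, |B.indicator (fun _ => (1:ℝ)) x| ∂μ = (μ B).toReal := by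
    rw [show (fun x => |B.indicator (fun _ => (1:ℝ)) x|) = B.indicator (fun _ => (1:ℝ)) by
      funext x; by_cases hx : x ∈ B <;> simp [Set.indicator_apply, hx]]
    exact integral_indicator_one hB
  rw [hmix, hA', hB', habs] at h
  exact h

lemma Nγ_nonneg
    (hdecay : ∀ φ ∈ 𝒞, ∀ ψ : X → ℝ, Integrable ψ μ → ∀ n : ℕ,
      |(∫ x, φ x * ψ (f^[n] x) ∂μ) - (∫ x, φ x ∂μ) * ∫ x, ψ x ∂μ| ≤
        N φ * (∫ x, |ψ x| ∂μ) * γ n)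
    (hind : A.indicator (fun _ => (1 : ℝ)) ∈ 𝒞) (n : ℕ) :
    0 ≤ N (A.indicator fun _ => (1 : ℝ)) * γ n := by
  have h := hdecay _ hind (fun _ => (1 : ℝ)) (integrable_const 1) n
  simp at h
  calc (0:ℝ) ≤ |∫ x, A.indicator (fun _ => (1:ℝ)) x * 1 ∂μ -
      (∫ x, A.indicator (fun _ => (1:ℝ)) x ∂μ) * ∫ x, (1:ℝ) ∂μ| := abs_nonneg _
    _ ≤ _ := by
      have h := hdecay _ hind (fun _ => (1 : ℝ)) (integrable_const 1) n
      simpa using h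
lemma pairsum (γ : ℕ → ℝ) (pa NA : ℝ) (R ℓ t : ℕ)
    (hpa : 0 ≤ pa) (hγ : ∀ n, 0 ≤ γ n) (hNγ : ∀ n, 0 ≤ NA * γ n) :
    ∑ j ∈ Finset.range ℓ, ∑ i ∈ Finset.range j,
      (if R ≤ j - i then (pa + NA * γ (j - i)) * (pa + NA * γ t) else 0)
    ≤ NA * ((ℓ - R : ℕ) : ℝ) * (pa + NA * γ t) * (∑ q ∈ Finset.Ico R ℓ, γ q)
      + (ℓ : ℝ) * ((ℓ - R : ℕ) : ℝ) * (pa ^ 2 + pa * (NA * γ t)) := by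
  set g : ℕ → ℝ := fun q => if R ≤ q then (pa + NA * γ q) * (pa + NA * γ t) else 0 with hg
  have hg0 : ∀ q, 0 ≤ g q := by
    intro q
    simp only [hg]
    split
    · exact mul_nonneg (by nlinarith [hNγ q]) (by nlinarith [hNγ t])
    · exact le_rfl
  set S : ℝ := ∑ q ∈ Finset.Ico R ℓ, (pa + NA * γ q) * (pa + NA * γ t) with hS
  have hS0 : 0 ≤ S := Finset.sum_nonneg fun q _ => mul_nonneg (by nlinarith [hNγ q]) (by nlinarith [hNγ t])
  have inner_le : ∀ j < ℓ, (∑ i ∈ Finset.range j, g (j - i)) ≤ if R ≤ j then S else 0 := by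
    intro j hj
    have h1 : ∑ i ∈ Finset.range j, g (j - i) = ∑ i ∈ Finset.range j, g (i + 1) := by
      rw [← Finset.sum_range_reflect]
      apply Finset.sum_congr rfl
      intro i hi
      simp only [Finset.mem_range] at hi
      congr 1
      omega
    have h2 : ∑ i ∈ Finset.range j, g (i + 1) = ∑ q ∈ Finset.Ico 1 (j + 1), g q := by
      rw [Finset.sum_Ico_eq_sum_range]
      simp only [Nat.add_sub_cancel]
      apply Finset.sum_congr rfl
      intro i _
      congr 1
      omega
    rw [h1, h2]
    by_cases hRj : R ≤ j
    · rw [if_pos hRj]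
      have h3 : ∑ q ∈ Finset.Ico 1 (j + 1), g q
          = ∑ q ∈ (Finset.Ico 1 (j + 1)).filter (fun q => R ≤ q), g q := by
        rw [Finset.sum_filter_of_ne]
        intro q _ hq
        by_contra hc
        exact hq (by simp [hg, hc])
      rw [h3, hS]
      have h4 : ∑ q ∈ (Finset.Ico 1 (j + 1)).filter (fun q => R ≤ q), g q
          = ∑ q ∈ (Finset.Ico 1 (j + 1)).filter (fun q => R ≤ q),
              (pa + NA * γ q) * (pa + NA * γ t) := by
        apply Finset.sum_congr rfl
        intro q hq
        simp only [Finset.mem_filter] at hq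
        simp [hg, hq.2]
      rw [h4]
      apply Finset.sum_le_sum_of_subset_of_nonneg
      · intro q hq
        simp only [Finset.mem_filter, Finset.mem_Ico] at hq ⊢
        omega
      · intro q _ _
        exact mul_nonneg (by nlinarith [hNγ q]) (by nlinarith [hNγ t])
    · rw [if_neg hRj]
      apply le_of_eq
      apply Finset.sum_eq_zero
      intro q hq
      simp only [Finset.mem_Ico] at hq
      simp [hg, show ¬ R ≤ q by omega]
  have houter : ∑ j ∈ Finset.range ℓ, ∑ i ∈ Finset.range j, g (j - i)
      ≤ ((ℓ - R : ℕ) : ℝ) * S := by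
    calc ∑ j ∈ Finset.range ℓ, ∑ i ∈ Finset.range j, g (j - i)
        ≤ ∑ j ∈ Finset.range ℓ, (if R ≤ j then S else 0) := by
          apply Finset.sum_le_sum
          intro j hj
          exact inner_le j (Finset.mem_range.1 hj)
      _ = ∑ j ∈ (Finset.range ℓ).filter (fun j => R ≤ j), S := by
          rw [Finset.sum_filter]
      _ = (((Finset.range ℓ).filter (fun j => R ≤ j)).card : ℝ) * S := by
          rw [Finset.sum_const, nsmul_eq_mul]
      _ = ((ℓ - R : ℕ) : ℝ) * S := by
          congr 2
          have : (Finset.range ℓ).filter (fun j => R ≤ j) = Finset.Ico R ℓ := by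
            ext j; simp [Finset.mem_filter, Finset.mem_Ico]; omega
          rw [this, Nat.card_Ico]
  have hScalc : S = (pa + NA * γ t) * (((ℓ - R : ℕ) : ℝ) * pa + NA * ∑ q ∈ Finset.Ico R ℓ, γ q) := by
    rw [hS]
    rw [Finset.sum_congr rfl (fun q _ => mul_comm (pa + NA * γ q) (pa + NA * γ t))]
    rw [← Finset.mul_sum, Finset.sum_add_distrib, Finset.sum_const, Nat.card_Ico, nsmul_eq_mul,
      ← Finset.mul_sum]
  have hcard : ((ℓ - R : ℕ) : ℝ) ≤ (ℓ : ℝ) := by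
    exact_mod_cast Nat.cast_le.2 (Nat.sub_le ℓ R)
  have hSg : 0 ≤ ∑ q ∈ Finset.Ico R ℓ, γ q := Finset.sum_nonneg fun q _ => hγ q
  have hNSg : 0 ≤ NA * ∑ q ∈ Finset.Ico R ℓ, γ q := by
    rw [Finset.mul_sum]; exact Finset.sum_nonneg fun q _ => hNγ q
  have hcast0 : (0:ℝ) ≤ ((ℓ - R : ℕ) : ℝ) := Nat.cast_nonneg _
  calc ∑ j ∈ Finset.range ℓ, ∑ i ∈ Finset.range j,
        (if R ≤ j - i then (pa + NA * γ (j - i)) * (pa + NA * γ t) else 0)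
      = ∑ j ∈ Finset.range ℓ, ∑ i ∈ Finset.range j, g (j - i) := rfl
    _ ≤ ((ℓ - R : ℕ) : ℝ) * S := houter
    _ ≤ _ := by
        rw [hScalc]
        have h1 : 0 ≤ pa ^ 2 + pa * (NA * γ t) := by nlinarith [hNγ t]
        have h2 : ((ℓ - R : ℕ) : ℝ) * ((ℓ - R : ℕ) : ℝ) * (pa ^ 2 + pa * (NA * γ t)) ≤
            (ℓ : ℝ) * ((ℓ - R : ℕ) : ℝ) * (pa ^ 2 + pa * (NA * γ t)) := by
          apply mul_le_mul_of_nonneg_right _ h1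
          exact mul_le_mul_of_nonneg_right hcard hcast0
        nlinarith [h2]

lemma preim_split {X : Type*} (f : X → X) (a b : ℕ) (S : Set X) :
    f^[a + b] ⁻¹' S = f^[b] ⁻¹' (f^[a] ⁻¹' S) := by
  rw [Function.iterate_add, Set.preimage_comp]

variable {X : Type*} [MeasurableSpace X] {μ : Measure X} [IsProbabilityMeasure μ]
  {f : X → X} {𝒞 : Set (X → ℝ)} {N : (X → ℝ) → ℝ} {γ : ℕ → ℝ} {A : Set X}

theorem core1 (hf : MeasurePreserving f μ μ)
    (hdecay : ∀ φ ∈ 𝒞, ∀ ψ : X → ℝ, Integrable ψ μ → ∀ n : ℕ,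
      |(∫ x, φ x * ψ (f^[n] x) ∂μ) - (∫ x, φ x ∂μ) * ∫ x, ψ x ∂μ| ≤
        N φ * (∫ x, |ψ x| ∂μ) * γ n)
    (hA : MeasurableSet A) (hind : A.indicator (fun _ => (1 : ℝ)) ∈ 𝒞)
    (hγmono : Antitone γ) (hγnn : ∀ n, 0 ≤ γ n)
    (R : ℕ) (hR : ∀ i, 0 < i → i < R → A ∩ f^[i] ⁻¹' A = ∅)
    (ℓ t : ℕ) (m : ℕ) :
    |(μ (avoidWindow f 0 ℓ A ∩ f^[ℓ + t] ⁻¹' avoidWindow f 0 m A)).toReal -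
        (1 - (ℓ : ℝ) * (μ A).toReal) * (μ (avoidWindow f 0 m A)).toReal| ≤
      (N (A.indicator fun _ => (1 : ℝ)) * (ℓ : ℝ) * γ t +
        N (A.indicator fun _ => (1 : ℝ)) * ((ℓ - R : ℕ) : ℝ) *
          ((μ A).toReal + N (A.indicator fun _ => (1 : ℝ)) * γ t) *
          (∑ q ∈ Finset.Ico R ℓ, γ q) +
        (ℓ : ℝ) * ((ℓ - R : ℕ) : ℝ) *
          ((μ A).toReal ^ 2 + (μ A).toReal * (N (A.indicator fun _ => (1 : ℝ)) * γ t))) *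
        (μ (avoidWindow f 0 m A)).toReal := by
  classical
  set NA := N (A.indicator fun _ => (1 : ℝ)) with hNA
  set pa := (μ A).toReal with hpa
  set W := avoidWindow f 0 m A with hW
  have hWm : MeasurableSet W := aw_meas hf.measurable hA m
  set w := (μ W).toReal with hw
  have hw0 : 0 ≤ w := ENNReal.toReal_nonneg
  have hpa0 : 0 ≤ pa := ENNReal.toReal_nonneg
  have hNγ : ∀ n, 0 ≤ NA * γ n := fun n => Nγ_nonneg hdecay hind n
  have hNAmono : ∀ n, t ≤ n → NA * γ n ≤ NA * γ t := by
    intro n hn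
    rcases le_or_gt 0 NA with h | h
    · exact mul_le_mul_of_nonneg_left (hγmono hn) h
    · have h1 : γ n = 0 := le_antisymm (by nlinarith [hNγ n]) (hγnn n)
      rw [h1, mul_zero]; exact hNγ t
  set C := f^[ℓ + t] ⁻¹' W with hC
  have hCm : MeasurableSet C := (hf.measurable.iterate (ℓ + t)) hWm
  have hμC : μ C = μ W := (hf.iterate (ℓ + t)).measure_preimage hWm.nullMeasurableSet
  set F : ℕ → Set X := fun i => f^[i] ⁻¹' A ∩ C with hF
  have hFm : ∀ i, MeasurableSet (F i) := fun i => ((hf.measurable.iterate i) hA).inter hCm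
  set U := ⋃ i ∈ Finset.range ℓ, F i with hU
  have hUm : MeasurableSet U := Finset.measurableSet_biUnion _ fun i _ => hFm i
  have hUsub : U ⊆ C := by
    rw [hU]
    exact Set.iUnion₂_subset fun i _ => Set.inter_subset_right
  have hWCeq : avoidWindow f 0 ℓ A ∩ C = C \ U := by
    ext x
    simp only [Set.mem_inter_iff, Set.mem_diff, hU, Set.mem_iUnion, mem_aw, hF,
      Set.mem_inter_iff, Finset.mem_range, Set.mem_preimage]
    constructor
    · rintro ⟨h1, h2⟩
      exact ⟨h2, by rintro ⟨i, hi, hxA, -⟩; exact h1 i hi hxA⟩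
    · rintro ⟨h1, h2⟩
      refine ⟨fun i hi hxA => h2 ⟨i, hi, hxA, h1⟩, h1⟩
  -- basic real quantities
  set x := (μ (avoidWindow f 0 ℓ A ∩ C)).toReal with hx
  set u := (μ U).toReal with hu
  have hxu : x + u = w := by
    have := measure_diff_add_inter (μ := μ) C hUm
    rw [Set.inter_eq_self_of_subset_right hUsub] at this
    rw [hx, hWCeq, hu, hw, ← hμC, ← this,
      ENNReal.toReal_add (measure_ne_top μ _) (measure_ne_top μ _)]
  -- the single sums
  set s : ℝ := ∑ i ∈ Finset.range ℓ, (μ (F i)).toReal with hs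
  set p : ℝ := ∑ j ∈ Finset.range ℓ, ∑ i ∈ Finset.range j, (μ (F i ∩ F j)).toReal with hp
  have hu_le_s : u ≤ s := by
    rw [hu, hs, ← ENNReal.toReal_sum (fun i _ => measure_ne_top μ _)]
    exact (ENNReal.toReal_le_toReal (measure_ne_top μ _)
      (ENNReal.sum_ne_top.2 fun i _ => measure_ne_top μ _)).2
      (measure_biUnion_finset_le _ _)
  have hs_le : s ≤ u + p := by
    have hb := bonferroni μ F hFm ℓ
    have hne1 : (μ U + ∑ j ∈ Finset.range ℓ, ∑ i ∈ Finset.range j, μ (F i ∩ F j)) ≠ ⊤ := by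
      apply ENNReal.add_ne_top.2
      exact ⟨measure_ne_top μ _, ENNReal.sum_ne_top.2 fun j _ =>
        ENNReal.sum_ne_top.2 fun i _ => measure_ne_top μ _⟩
    have := (ENNReal.toReal_le_toReal
      (ENNReal.sum_ne_top.2 fun i _ => measure_ne_top μ _) hne1).2 hb
    rw [ENNReal.toReal_add (measure_ne_top μ _) (ENNReal.sum_ne_top.2 fun j _ =>
        ENNReal.sum_ne_top.2 fun i _ => measure_ne_top μ _),
      ENNReal.toReal_sum (fun i _ => measure_ne_top μ _),
      ENNReal.toReal_sum (fun j _ => ENNReal.sum_ne_top.2 fun i _ => measure_ne_top μ _)] at this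
    rw [hs, hu, hp]
    calc (∑ i ∈ Finset.range ℓ, (μ (F i)).toReal)
        ≤ (μ U).toReal + ∑ j ∈ Finset.range ℓ,
            (∑ i ∈ Finset.range j, μ (F i ∩ F j)).toReal := this
      _ = (μ U).toReal + ∑ j ∈ Finset.range ℓ, ∑ i ∈ Finset.range j, (μ (F i ∩ F j)).toReal := by
          congr 1
          exact Finset.sum_congr rfl fun j _ =>
            ENNReal.toReal_sum (fun i _ => measure_ne_top μ _)
  -- identify μ (F i)
  have hFi_eq : ∀ i, i < ℓ → μ (F i) = μ (A ∩ f^[ℓ + t - i] ⁻¹' W) := by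
    intro i hi
    have hset : F i = f^[i] ⁻¹' (A ∩ f^[ℓ + t - i] ⁻¹' W) := by
      rw [Set.preimage_inter, hF, hC]
      congr 1
      rw [← preim_split, show ℓ + t - i + i = ℓ + t by omega]
    rw [hset]
    exact (hf.iterate i).measure_preimage
      ((hA.inter ((hf.measurable.iterate _) hWm)).nullMeasurableSet)
  have hsingle : ∀ i, i < ℓ → |(μ (F i)).toReal - pa * w| ≤ (NA * γ t) * w := by
    intro i hi
    rw [hFi_eq i hi]
    have h := cor hf hdecay hA hind hWm (ℓ + t - i)
    rw [← hNA, ← hpa, ← hw] at h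
    calc |(μ (A ∩ f^[ℓ + t - i] ⁻¹' W)).toReal - pa * w|
        ≤ NA * w * γ (ℓ + t - i) := h
      _ = (NA * γ (ℓ + t - i)) * w := by ring
      _ ≤ (NA * γ t) * w := mul_le_mul_of_nonneg_right (hNAmono _ (by omega)) hw0
  have hsum_single : |s - (ℓ : ℝ) * pa * w| ≤ (ℓ : ℝ) * (NA * γ t) * w := by
    have : s - (ℓ : ℝ) * pa * w = ∑ i ∈ Finset.range ℓ, ((μ (F i)).toReal - pa * w) := by
      rw [hs, Finset.sum_sub_distrib, Finset.sum_const, Finset.card_range, nsmul_eq_mul]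
      ring
    rw [this]
    calc |∑ i ∈ Finset.range ℓ, ((μ (F i)).toReal - pa * w)|
        ≤ ∑ i ∈ Finset.range ℓ, |(μ (F i)).toReal - pa * w| := Finset.abs_sum_le_sum_abs _ _
      _ ≤ ∑ i ∈ Finset.range ℓ, (NA * γ t) * w :=
          Finset.sum_le_sum fun i hi => hsingle i (Finset.mem_range.1 hi)
      _ = (ℓ : ℝ) * (NA * γ t) * w := by
          rw [Finset.sum_const, Finset.card_range, nsmul_eq_mul]; ring
  -- pairs
  have hpair : ∀ i j, i < j → j < ℓ →
      (μ (F i ∩ F j)).toReal ≤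
        (if R ≤ j - i then (pa + NA * γ (j - i)) * (pa + NA * γ t) else 0) * w := by
    intro i j hij hj
    set B := A ∩ f^[ℓ + t - j] ⁻¹' W with hB
    have hBm : MeasurableSet B := hA.inter ((hf.measurable.iterate _) hWm)
    have it2 : ∀ y : X, f^[j - i] (f^[i] y) = f^[j] y := by
      intro y; rw [← Function.iterate_add_apply, show j - i + i = j by omega]
    have it3 : ∀ y : X, f^[ℓ + t - j] (f^[j] y) = f^[ℓ + t] y := by
      intro y
      rw [← Function.iterate_add_apply, show ℓ + t - j + j = ℓ + t by omega]
    have hseteq : F i ∩ F j = f^[i] ⁻¹' (A ∩ f^[j - i] ⁻¹' B) := by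
      ext y
      simp only [hF, hB, hC, Set.mem_inter_iff, Set.mem_preimage, it2, it3]
      tauto
    have hμeq : μ (F i ∩ F j) = μ (A ∩ f^[j - i] ⁻¹' B) := by
      rw [hseteq]
      exact (hf.iterate i).measure_preimage
        ((hA.inter ((hf.measurable.iterate _) hBm)).nullMeasurableSet)
    by_cases hRji : R ≤ j - i
    · rw [if_pos hRji, hμeq]
      have hBbound : (μ B).toReal ≤ (pa + NA * γ t) * w := by
        have h := cor hf hdecay hA hind hWm (ℓ + t - j)
        rw [← hNA, ← hpa, ← hw] at h
        have h2 := abs_le.1 h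
        have h3 : NA * γ (ℓ + t - j) ≤ NA * γ t := hNAmono _ (by omega)
        rw [hB]
        nlinarith [h2.2, mul_le_mul_of_nonneg_right h3 hw0]
      have h := cor hf hdecay hA hind hBm (j - i)
      rw [← hNA, ← hpa] at h
      have h2 := (abs_le.1 h).2
      have hq0 : 0 ≤ pa + NA * γ (j - i) := by nlinarith [hNγ (j - i)]
      have hBnn : 0 ≤ (μ B).toReal := ENNReal.toReal_nonneg
      calc (μ (A ∩ f^[j - i] ⁻¹' B)).toReal
          ≤ pa * (μ B).toReal + NA * (μ B).toReal * γ (j - i) := by linarith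
        _ = (pa + NA * γ (j - i)) * (μ B).toReal := by ring
        _ ≤ (pa + NA * γ (j - i)) * ((pa + NA * γ t) * w) :=
            mul_le_mul_of_nonneg_left hBbound hq0
        _ = (pa + NA * γ (j - i)) * (pa + NA * γ t) * w := by ring
    · rw [if_neg hRji, zero_mul, hμeq]
      have : A ∩ f^[j - i] ⁻¹' B = ∅ := by
        apply Set.eq_empty_of_subset_empty
        calc A ∩ f^[j - i] ⁻¹' B ⊆ A ∩ f^[j - i] ⁻¹' A := by
              apply Set.inter_subset_inter_right
              apply Set.preimage_mono
              exact Set.inter_subset_left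
          _ = ∅ := hR (j - i) (by omega) (by omega)
      rw [this]
      simp
  have hp_le : p ≤ (NA * ((ℓ - R : ℕ) : ℝ) * (pa + NA * γ t) * (∑ q ∈ Finset.Ico R ℓ, γ q) +
      (ℓ : ℝ) * ((ℓ - R : ℕ) : ℝ) * (pa ^ 2 + pa * (NA * γ t))) * w := by
    have h1 : p ≤ ∑ j ∈ Finset.range ℓ, ∑ i ∈ Finset.range j,
        (if R ≤ j - i then (pa + NA * γ (j - i)) * (pa + NA * γ t) else 0) * w := by
      rw [hp]
      apply Finset.sum_le_sum
      intro j hj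
      apply Finset.sum_le_sum
      intro i hi
      exact hpair i j (Finset.mem_range.1 hi) (Finset.mem_range.1 hj)
    have h2 : ∑ j ∈ Finset.range ℓ, ∑ i ∈ Finset.range j,
        (if R ≤ j - i then (pa + NA * γ (j - i)) * (pa + NA * γ t) else 0) * w
        = (∑ j ∈ Finset.range ℓ, ∑ i ∈ Finset.range j,
            (if R ≤ j - i then (pa + NA * γ (j - i)) * (pa + NA * γ t) else 0)) * w := by
      rw [Finset.sum_mul]
      exact Finset.sum_congr rfl fun j _ => by rw [Finset.sum_mul]
    have h3 := pairsum γ pa NA R ℓ t hpa0 hγnn hNγ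
    calc p ≤ _ := h1
      _ = _ := h2
      _ ≤ _ := mul_le_mul_of_nonneg_right h3 hw0
  -- combine
  have habs : ∀ y : ℝ, x - (1 - (ℓ:ℝ) * pa) * w = ((ℓ:ℝ) * pa * w - s) + (s - u) := by
    intro y
    have : x = w - u := by linarith [hxu]
    rw [this]; ring
  have hfinal : |x - (1 - (ℓ:ℝ) * pa) * w| ≤
      ((ℓ:ℝ) * (NA * γ t) * w) +
        (NA * ((ℓ - R : ℕ) : ℝ) * (pa + NA * γ t) * (∑ q ∈ Finset.Ico R ℓ, γ q) +
          (ℓ : ℝ) * ((ℓ - R : ℕ) : ℝ) * (pa ^ 2 + pa * (NA * γ t))) * w := by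
    rw [habs 0]
    have h1 := abs_le.1 hsum_single
    have h2 : 0 ≤ s - u := by linarith [hu_le_s]
    have h3 : s - u ≤ p := by linarith [hs_le]
    rw [abs_le]
    constructor
    · nlinarith [hp_le]
    · nlinarith [hp_le]
  calc |x - (1 - (ℓ:ℝ) * pa) * w| ≤ _ := hfinal
    _ = (NA * (ℓ : ℝ) * γ t +
        NA * ((ℓ - R : ℕ) : ℝ) * (pa + NA * γ t) * (∑ q ∈ Finset.Ico R ℓ, γ q) +
        (ℓ : ℝ) * ((ℓ - R : ℕ) : ℝ) * (pa ^ 2 + pa * (NA * γ t))) * w := by ring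

theorem core3 (hf : MeasurePreserving f μ μ)
    (hdecay : ∀ φ ∈ 𝒞, ∀ ψ : X → ℝ, Integrable ψ μ → ∀ n : ℕ,
      |(∫ x, φ x * ψ (f^[n] x) ∂μ) - (∫ x, φ x ∂μ) * ∫ x, ψ x ∂μ| ≤
        N φ * (∫ x, |ψ x| ∂μ) * γ n)
    (hA : MeasurableSet A) (hind : A.indicator (fun _ => (1 : ℝ)) ∈ 𝒞)
    (hγmono : Antitone γ) (hγnn : ∀ n, 0 ≤ γ n)
    (R : ℕ) (hR : ∀ i, 0 < i → i < R → A ∩ f^[i] ⁻¹' A = ∅)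
    (ℓ t : ℕ) (m : ℕ) :
    |(μ (avoidWindow f 0 (ℓ + t + m) A)).toReal -
        (1 - (ℓ : ℝ) * (μ A).toReal) * (μ (avoidWindow f 0 m A)).toReal| ≤
      ((t : ℝ) * ((μ A).toReal + N (A.indicator fun _ => (1 : ℝ)) * γ t) +
       (N (A.indicator fun _ => (1 : ℝ)) * (ℓ : ℝ) * γ t +
        N (A.indicator fun _ => (1 : ℝ)) * ((ℓ - R : ℕ) : ℝ) *
          ((μ A).toReal + N (A.indicator fun _ => (1 : ℝ)) * γ t) *
          (∑ q ∈ Finset.Ico R ℓ, γ q) +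
        (ℓ : ℝ) * ((ℓ - R : ℕ) : ℝ) *
          ((μ A).toReal ^ 2 + (μ A).toReal * (N (A.indicator fun _ => (1 : ℝ)) * γ t)))) *
        (μ (avoidWindow f 0 (m - t) A)).toReal := by
  classical
  set NA := N (A.indicator fun _ => (1 : ℝ)) with hNA
  set pa := (μ A).toReal with hpa
  have hpa0 : 0 ≤ pa := ENNReal.toReal_nonneg
  have hNγ : ∀ n, 0 ≤ NA * γ n := fun n => Nγ_nonneg hdecay hind n
  set W := avoidWindow f 0 m A with hW
  have hWm : MeasurableSet W := aw_meas hf.measurable hA m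
  set w := (μ W).toReal with hw
  set b := (μ (avoidWindow f 0 (m - t) A)).toReal with hb
  have hb0 : 0 ≤ b := ENNReal.toReal_nonneg
  have hwb : w ≤ b := by
    rw [hw, hb]
    exact (ENNReal.toReal_le_toReal (measure_ne_top μ _) (measure_ne_top μ _)).2
      (measure_mono (aw_anti (Nat.sub_le m t)))
  set Ξv : ℝ := NA * (ℓ : ℝ) * γ t +
      NA * ((ℓ - R : ℕ) : ℝ) * (pa + NA * γ t) * (∑ q ∈ Finset.Ico R ℓ, γ q) +
      (ℓ : ℝ) * ((ℓ - R : ℕ) : ℝ) * (pa ^ 2 + pa * (NA * γ t)) with hΞdef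
  have hΞ0 : 0 ≤ Ξv := by
    rw [hΞdef]
    have h1 : 0 ≤ NA * (ℓ : ℝ) * γ t := by
      have := hNγ t
      have hl0 : (0:ℝ) ≤ (ℓ:ℝ) := Nat.cast_nonneg _
      nlinarith
    have hNs : 0 ≤ NA * ∑ q ∈ Finset.Ico R ℓ, γ q := by
      rw [Finset.mul_sum]; exact Finset.sum_nonneg fun q _ => hNγ q
    have hfac : 0 ≤ pa + NA * γ t := by nlinarith [hNγ t]
    have h2 : 0 ≤ NA * ((ℓ - R : ℕ) : ℝ) * (pa + NA * γ t) * (∑ q ∈ Finset.Ico R ℓ, γ q) := by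
      have heq : NA * ((ℓ - R : ℕ) : ℝ) * (pa + NA * γ t) * (∑ q ∈ Finset.Ico R ℓ, γ q)
          = ((ℓ - R : ℕ) : ℝ) * (pa + NA * γ t) * (NA * ∑ q ∈ Finset.Ico R ℓ, γ q) := by ring
      rw [heq]
      exact mul_nonneg (mul_nonneg (Nat.cast_nonneg _) hfac) hNs
    have h3 : 0 ≤ (ℓ : ℝ) * ((ℓ - R : ℕ) : ℝ) * (pa ^ 2 + pa * (NA * γ t)) := by
      have : 0 ≤ pa ^ 2 + pa * (NA * γ t) := by nlinarith [hNγ t]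
      exact mul_nonneg (mul_nonneg (Nat.cast_nonneg _) (Nat.cast_nonneg _)) this
    linarith
  have h1 := core1 hf hdecay hA hind hγmono hγnn R hR ℓ t m
  rw [← hNA, ← hpa, ← hw, ← hΞdef] at h1
  set C := f^[ℓ + t] ⁻¹' W with hC
  set x := (μ (avoidWindow f 0 ℓ A ∩ C)).toReal with hx
  have hup : (μ (avoidWindow f 0 (ℓ + t + m) A)).toReal ≤ x := by
    apply (ENNReal.toReal_le_toReal (measure_ne_top μ _) (measure_ne_top μ _)).2
    apply measure_mono
    have hsub := aw_sub2 (f := f) (A := A) ℓ t (t + m)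
    rw [show ℓ + (t + m) = ℓ + t + m by omega, show t + m - t = m by omega] at hsub
    exact hsub
  -- gap bound
  have hterm : ∀ i ∈ Finset.Ico ℓ (ℓ + t),
      (μ (f^[i] ⁻¹' A ∩ C)).toReal ≤ (pa + NA * γ t) * b := by
    intro i hi
    rw [Finset.mem_Ico] at hi
    set g := ℓ + t - i with hg
    have hg1 : g ≤ t := by omega
    have it1 : ∀ y : X, f^[g] (f^[i] y) = f^[ℓ + t] y := by
      intro y; rw [← Function.iterate_add_apply, show g + i = ℓ + t by omega]
    have hseteq : f^[i] ⁻¹' A ∩ C = f^[i] ⁻¹' (A ∩ f^[g] ⁻¹' W) := by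
      ext y
      simp only [hC, Set.mem_inter_iff, Set.mem_preimage, it1]
    have hμeq : μ (f^[i] ⁻¹' A ∩ C) = μ (A ∩ f^[g] ⁻¹' W) := by
      rw [hseteq]
      exact (hf.iterate i).measure_preimage
        ((hA.inter ((hf.measurable.iterate _) hWm)).nullMeasurableSet)
    set W' := avoidWindow f 0 (m - (t - g)) A with hW'
    have hW'm : MeasurableSet W' := aw_meas hf.measurable hA _
    have hmono2 : μ (A ∩ f^[g] ⁻¹' W) ≤ μ (A ∩ f^[t] ⁻¹' W') := by
      apply measure_mono
      apply Set.inter_subset_inter_right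
      rw [hW, hW']
      exact aw_sub4 hg1 m
    have hcor := cor hf hdecay hA hind hW'm t
    rw [← hNA, ← hpa] at hcor
    have hw' : (μ W').toReal ≤ b := by
      rw [hb]
      apply (ENNReal.toReal_le_toReal (measure_ne_top μ _) (measure_ne_top μ _)).2
      apply measure_mono
      rw [hW']
      exact aw_anti (by omega)
    have hw'0 : (0:ℝ) ≤ (μ W').toReal := ENNReal.toReal_nonneg
    have hup2 := (abs_le.1 hcor).2
    have hfac : 0 ≤ pa + NA * γ t := by nlinarith [hNγ t]
    calc (μ (f^[i] ⁻¹' A ∩ C)).toReal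
        = (μ (A ∩ f^[g] ⁻¹' W)).toReal := by rw [hμeq]
      _ ≤ (μ (A ∩ f^[t] ⁻¹' W')).toReal :=
          (ENNReal.toReal_le_toReal (measure_ne_top μ _) (measure_ne_top μ _)).2 hmono2
      _ ≤ pa * (μ W').toReal + NA * (μ W').toReal * γ t := by linarith
      _ = (pa + NA * γ t) * (μ W').toReal := by ring
      _ ≤ (pa + NA * γ t) * b := mul_le_mul_of_nonneg_left hw' hfac
  have hgap : x ≤ (μ (avoidWindow f 0 (ℓ + t + m) A)).toReal + (t:ℝ) * ((pa + NA * γ t) * b) := by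
    have hsub := aw_sub3 (f := f) (A := A) ℓ t m
    have hmono := measure_mono (μ := μ) hsub
    have hle : μ (avoidWindow f 0 ℓ A ∩ C) ≤
        μ (avoidWindow f 0 (ℓ + t + m) A) + ∑ i ∈ Finset.Ico ℓ (ℓ + t), μ (f^[i] ⁻¹' A ∩ C) := by
      calc μ (avoidWindow f 0 ℓ A ∩ C) ≤ _ := hmono
        _ ≤ μ (avoidWindow f 0 (ℓ + t + m) A) +
            μ (⋃ i ∈ Finset.Ico ℓ (ℓ + t), (f^[i] ⁻¹' A ∩ C)) := measure_union_le _ _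
        _ ≤ _ := add_le_add le_rfl (measure_biUnion_finset_le _ _)
    have hle' := (ENNReal.toReal_le_toReal (measure_ne_top μ _) (by
      exact ENNReal.add_ne_top.2 ⟨measure_ne_top μ _,
        ENNReal.sum_ne_top.2 fun i _ => measure_ne_top μ _⟩)).2 hle
    rw [ENNReal.toReal_add (measure_ne_top μ _)
      (ENNReal.sum_ne_top.2 fun i _ => measure_ne_top μ _),
      ENNReal.toReal_sum (fun i _ => measure_ne_top μ _)] at hle'
    have hsum : ∑ i ∈ Finset.Ico ℓ (ℓ + t), (μ (f^[i] ⁻¹' A ∩ C)).toReal ≤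
        (t:ℝ) * ((pa + NA * γ t) * b) := by
      calc ∑ i ∈ Finset.Ico ℓ (ℓ + t), (μ (f^[i] ⁻¹' A ∩ C)).toReal
          ≤ ∑ i ∈ Finset.Ico ℓ (ℓ + t), (pa + NA * γ t) * b := Finset.sum_le_sum hterm
        _ = (t:ℝ) * ((pa + NA * γ t) * b) := by
            rw [Finset.sum_const, Nat.card_Ico, nsmul_eq_mul]
            congr 2
            omega
    rw [hx]
    linarith
  have habs := abs_le.1 h1
  rw [abs_le]
  have hΞwb : Ξv * w ≤ Ξv * b := mul_le_mul_of_nonneg_left hwb hΞ0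
  constructor
  · nlinarith [hNγ t, hb0]
  · nlinarith [hNγ t, hb0]

theorem core4 (hf : MeasurePreserving f μ μ)
    (hdecay : ∀ φ ∈ 𝒞, ∀ ψ : X → ℝ, Integrable ψ μ → ∀ n : ℕ,
      |(∫ x, φ x * ψ (f^[n] x) ∂μ) - (∫ x, φ x ∂μ) * ∫ x, ψ x ∂μ| ≤
        N φ * (∫ x, |ψ x| ∂μ) * γ n)
    (hA : MeasurableSet A) (hind : A.indicator (fun _ => (1 : ℝ)) ∈ 𝒞)
    (hγmono : Antitone γ) (hγnn : ∀ n, 0 ≤ γ n)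
    (R : ℕ) (hR : ∀ i, 0 < i → i < R → A ∩ f^[i] ⁻¹' A = ∅)
    (ℓ t : ℕ) (m' : ℕ) :
    (μ (avoidWindow f 0 (ℓ + m') A)).toReal ≤
      ((1 - (ℓ : ℝ) * (μ A).toReal) +
       (N (A.indicator fun _ => (1 : ℝ)) * (ℓ : ℝ) * γ t +
        N (A.indicator fun _ => (1 : ℝ)) * ((ℓ - R : ℕ) : ℝ) *
          ((μ A).toReal + N (A.indicator fun _ => (1 : ℝ)) * γ t) *
          (∑ q ∈ Finset.Ico R ℓ, γ q) +
        (ℓ : ℝ) * ((ℓ - R : ℕ) : ℝ) *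
          ((μ A).toReal ^ 2 + (μ A).toReal * (N (A.indicator fun _ => (1 : ℝ)) * γ t)))) *
        (μ (avoidWindow f 0 (m' - t) A)).toReal := by
  have h1 := core1 hf hdecay hA hind hγmono hγnn R hR ℓ t (m' - t)
  have hup : (μ (avoidWindow f 0 (ℓ + m') A)).toReal ≤
      (μ (avoidWindow f 0 ℓ A ∩ f^[ℓ + t] ⁻¹' avoidWindow f 0 (m' - t) A)).toReal := by
    apply (ENNReal.toReal_le_toReal (measure_ne_top μ _) (measure_ne_top μ _)).2
    apply measure_mono
    intro y hy
    have hsub := aw_sub2 (f := f) (A := A) ℓ t m'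
    rcases lt_or_ge m' t with hc | hc
    · constructor
      · exact aw_anti (by omega) hy
      · rw [Set.mem_preimage, show m' - t = 0 by omega, aw_zero]
        trivial
    · exact hsub (by rwa [show ℓ + m' = ℓ + m' from rfl] at hy)
  have h2 := (abs_le.1 h1).2
  linarith

end BPE

open BPE in
theorem block_power_estimate {X : Type*} [MeasurableSpace X] (μ : Measure X)
    [IsProbabilityMeasure μ] (f : X → X) (hf : MeasurePreserving f μ μ)
    (𝒞 : Set (X → ℝ)) (N : (X → ℝ) → ℝ) (γ : ℕ → ℝ)
    (hγmono : Antitone γ) (hγ0 : Filter.Tendsto γ Filter.atTop (nhds 0))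
    (hdecay : ∀ φ ∈ 𝒞, ∀ ψ : X → ℝ, Integrable ψ μ → ∀ n : ℕ,
      |(∫ x, φ x * ψ (f^[n] x) ∂μ) - (∫ x, φ x ∂μ) * ∫ x, ψ x ∂μ| ≤
        N φ * (∫ x, |ψ x| ∂μ) * γ n)
    (A : Set X) (hA : MeasurableSet A)
    (hind : A.indicator (fun _ => (1 : ℝ)) ∈ 𝒞)
    -- `R` is the first return time of the set `A`.
    (R : ℕ) (hR : ∀ i, 0 < i → i < R → A ∩ f^[i] ⁻¹' A = ∅)
    (ℓ t : ℕ) (hℓ : 0 < ℓ) (ht : 0 < t)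
    (hℓPA : (ℓ : ℝ) * (μ A).toReal < 1)
    (L Ξ Υ : ℝ) (hL : L = 1 - (ℓ : ℝ) * (μ A).toReal)
    (hΞ : Ξ = N (A.indicator fun _ => (1 : ℝ)) * (ℓ : ℝ) * γ t +
        N (A.indicator fun _ => (1 : ℝ)) * ((ℓ - R : ℕ) : ℝ) *
          ((μ A).toReal + N (A.indicator fun _ => (1 : ℝ)) * γ t) *
          ∑ q ∈ Finset.Ico R ℓ, γ q +
        (ℓ : ℝ) * ((ℓ - R : ℕ) : ℝ) *
          ((μ A).toReal ^ 2 + (μ A).toReal * N (A.indicator fun _ => (1 : ℝ)) * γ t))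
    (hΥ : Υ = (t : ℝ) * ((μ A).toReal + N (A.indicator fun _ => (1 : ℝ)) * γ t) + Ξ)
    (k : ℕ) :
    |(μ (avoidWindow f 0 (k * (ℓ + t)) A)).toReal - L ^ k| ≤
      (k : ℝ) * Υ * (L + Υ) ^ (k - 1) := by
  classical
  have hγnn : ∀ n, 0 ≤ γ n := fun n => hγmono.le_of_tendsto hγ0 n
  have hNγ : ∀ n, 0 ≤ N (A.indicator fun _ => (1 : ℝ)) * γ n :=
    fun n => Nγ_nonneg hdecay hind n
  have hpa0 : 0 ≤ (μ A).toReal := ENNReal.toReal_nonneg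
  have hL0 : 0 ≤ L := by rw [hL]; linarith
  have hΞ0 : 0 ≤ Ξ := by
    rw [hΞ]
    have h1 : 0 ≤ N (A.indicator fun _ => (1 : ℝ)) * (ℓ : ℝ) * γ t := by
      have := hNγ t
      have hl0 : (0:ℝ) ≤ (ℓ:ℝ) := Nat.cast_nonneg _
      nlinarith
    have hNs : 0 ≤ N (A.indicator fun _ => (1 : ℝ)) * ∑ q ∈ Finset.Ico R ℓ, γ q := by
      rw [Finset.mul_sum]; exact Finset.sum_nonneg fun q _ => hNγ q
    have hfac : 0 ≤ (μ A).toReal + N (A.indicator fun _ => (1 : ℝ)) * γ t := by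
      nlinarith [hNγ t]
    have h2 : 0 ≤ N (A.indicator fun _ => (1 : ℝ)) * ((ℓ - R : ℕ) : ℝ) *
        ((μ A).toReal + N (A.indicator fun _ => (1 : ℝ)) * γ t) *
        ∑ q ∈ Finset.Ico R ℓ, γ q := by
      have heq : N (A.indicator fun _ => (1 : ℝ)) * ((ℓ - R : ℕ) : ℝ) *
          ((μ A).toReal + N (A.indicator fun _ => (1 : ℝ)) * γ t) *
          ∑ q ∈ Finset.Ico R ℓ, γ q
          = ((ℓ - R : ℕ) : ℝ) * ((μ A).toReal + N (A.indicator fun _ => (1 : ℝ)) * γ t) *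
            (N (A.indicator fun _ => (1 : ℝ)) * ∑ q ∈ Finset.Ico R ℓ, γ q) := by ring
      rw [heq]
      exact mul_nonneg (mul_nonneg (Nat.cast_nonneg _) hfac) hNs
    have h3 : 0 ≤ (ℓ : ℝ) * ((ℓ - R : ℕ) : ℝ) *
        ((μ A).toReal ^ 2 + (μ A).toReal * N (A.indicator fun _ => (1 : ℝ)) * γ t) := by
      have : 0 ≤ (μ A).toReal ^ 2 + (μ A).toReal * N (A.indicator fun _ => (1 : ℝ)) * γ t := by
        nlinarith [hNγ t]
      exact mul_nonneg (mul_nonneg (Nat.cast_nonneg _) (Nat.cast_nonneg _)) this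
    linarith
  have hΞΥ : Ξ ≤ Υ := by
    rw [hΥ]
    have : 0 ≤ (t : ℝ) * ((μ A).toReal + N (A.indicator fun _ => (1 : ℝ)) * γ t) := by
      have := hNγ t
      have ht0 : (0:ℝ) ≤ (t:ℝ) := Nat.cast_nonneg _
      nlinarith
    linarith
  have hΥ0 : 0 ≤ Υ := le_trans hΞ0 hΞΥ
  -- the auxiliary sequence b
  set b : ℕ → ℝ := fun j => (μ (avoidWindow f 0 (j * (ℓ + t) - t) A)).toReal with hbdef
  have hb0 : ∀ j, 0 ≤ b j := fun j => ENNReal.toReal_nonneg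
  have hbzero : b 0 = 1 := by
    have harg0 : 0 * (ℓ + t) - t = 0 := by omega
    rw [hbdef]
    simp only
    rw [harg0, aw_zero]
    simp
  have hbrec : ∀ j, b (j + 1) ≤ (L + Ξ) * b j := by
    intro j
    have h := core4 hf hdecay hA hind hγmono hγnn R hR ℓ t (j * (ℓ + t))
    have harg : (j + 1) * (ℓ + t) - t = ℓ + j * (ℓ + t) := by ring_nf; omega
    calc b (j + 1) = (μ (avoidWindow f 0 (ℓ + j * (ℓ + t)) A)).toReal := by
          rw [hbdef]; simp only; rw [harg]
      _ ≤ _ := h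
      _ = (L + Ξ) * b j := by rw [hL, hΞ, hbdef]; ring
  have hbpow : ∀ j, b j ≤ (L + Υ) ^ j := by
    intro j
    induction j with
    | zero => rw [hbzero]; simp
    | succ n ih =>
      calc b (n + 1) ≤ (L + Ξ) * b n := hbrec n
        _ ≤ (L + Υ) * (L + Υ) ^ n := by
            apply mul_le_mul (by linarith) ih (hb0 n) (by linarith)
        _ = (L + Υ) ^ (n + 1) := by rw [pow_succ]; ring
  -- the step estimate for a
  set a : ℕ → ℝ := fun j => (μ (avoidWindow f 0 (j * (ℓ + t)) A)).toReal with hadef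
  have hastep : ∀ j, |a (j + 1) - L * a j| ≤ Υ * b j := by
    intro j
    have h := core3 hf hdecay hA hind hγmono hγnn R hR ℓ t (j * (ℓ + t))
    have harg : ℓ + t + j * (ℓ + t) = (j + 1) * (ℓ + t) := by ring
    rw [harg] at h
    calc |a (j + 1) - L * a j| = |(μ (avoidWindow f 0 ((j+1) * (ℓ + t)) A)).toReal -
          (1 - (ℓ : ℝ) * (μ A).toReal) * (μ (avoidWindow f 0 (j * (ℓ + t)) A)).toReal| := by
          rw [hadef, hL]
      _ ≤ _ := h
      _ = Υ * b j := by rw [hΥ, hΞ, hbdef]; ring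
  -- final induction
  have hmain : ∀ j : ℕ, |a j - L ^ j| ≤ (j : ℝ) * Υ * (L + Υ) ^ (j - 1) := by
    intro j
    induction j with
    | zero =>
      have : a 0 = 1 := by
        rw [hadef]; simp only [Nat.zero_mul]
        rw [aw_zero]; simp
      rw [this]; simp
    | succ n ih =>
      have h1 := hastep n
      have h2 : |a (n + 1) - L ^ (n + 1)| ≤ |a (n + 1) - L * a n| + L * |a n - L ^ n| := by
        have : a (n + 1) - L ^ (n + 1) = (a (n + 1) - L * a n) + L * (a n - L ^ n) := by
          rw [pow_succ]; ring
        rw [this]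
        calc |(a (n + 1) - L * a n) + L * (a n - L ^ n)| ≤
            |a (n + 1) - L * a n| + |L * (a n - L ^ n)| := abs_add_le _ _
          _ = |a (n + 1) - L * a n| + L * |a n - L ^ n| := by
              rw [abs_mul, abs_of_nonneg hL0]
      have h3 : Υ * b n ≤ Υ * (L + Υ) ^ n := mul_le_mul_of_nonneg_left (hbpow n) hΥ0
      have h4 : L * |a n - L ^ n| ≤ L * ((n : ℝ) * Υ * (L + Υ) ^ (n - 1)) :=
        mul_le_mul_of_nonneg_left ih hL0
      have h5 : L * ((n : ℝ) * Υ * (L + Υ) ^ (n - 1)) ≤ (n : ℝ) * Υ * (L + Υ) ^ n := by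
        rcases Nat.eq_zero_or_pos n with hn | hn
        · subst hn; simp
        · have hpow : (L + Υ) ^ (n - 1) * (L + Υ) = (L + Υ) ^ n := by
            rw [← pow_succ, Nat.sub_add_cancel hn]
          have hnn : 0 ≤ (n : ℝ) * Υ * (L + Υ) ^ (n - 1) :=
            mul_nonneg (mul_nonneg (Nat.cast_nonneg _) hΥ0) (pow_nonneg (by linarith) _)
          calc L * ((n : ℝ) * Υ * (L + Υ) ^ (n - 1))
              ≤ (L + Υ) * ((n : ℝ) * Υ * (L + Υ) ^ (n - 1)) :=
                mul_le_mul_of_nonneg_right (by linarith) hnn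
            _ = (n : ℝ) * Υ * (L + Υ) ^ n := by rw [← hpow]; ring
      have hfin : |a (n + 1) - L ^ (n + 1)| ≤ ((n : ℝ) + 1) * Υ * (L + Υ) ^ n := by
        calc |a (n + 1) - L ^ (n + 1)| ≤ |a (n + 1) - L * a n| + L * |a n - L ^ n| := h2
          _ ≤ Υ * b n + L * ((n : ℝ) * Υ * (L + Υ) ^ (n - 1)) := add_le_add h1 h4
          _ ≤ Υ * (L + Υ) ^ n + (n : ℝ) * Υ * (L + Υ) ^ n := add_le_add h3 h5
          _ = ((n : ℝ) + 1) * Υ * (L + Υ) ^ n := by ring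
      calc |a (n + 1) - L ^ (n + 1)| ≤ ((n : ℝ) + 1) * Υ * (L + Υ) ^ n := hfin
        _ = ((n + 1 : ℕ) : ℝ) * Υ * (L + Υ) ^ ((n + 1) - 1) := by
            push_cast; simp
  exact hmain k
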